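/- Fix integers d ≥ 2, N ≥ 1, K ≥ 1, and let V((a',b',b), a) := sqrt(d_S^N / d_S^{N+K}) · Π_sym^{(N+K)}((a',b'),(a,b)) as a matrix with rows indexed by triples (a',b',b) and columns by a, where a,a' : Fin N → Fin d and b,b' : Fin K → Fin d. Then for every complex matrix ρ on (Fin N → Fin d), the partial trace of V ρ V† over the last register satisfies ∑_b (V ρ V†)((a'₁,b'₁,b),(a'₂,b'₂,b)) = (d_S^N / d_S^{N+K}) · (Π_sym^{(N+K)} (ρ ⊗ I) Π_sym^{(N+K)})((a'₁,b'₁),(a'₂,b'₂)), where I is the identity on (Fin K → Fin d). That is, tracing out the last register of the Stinespring dilation yields Werner's optimal universal symmetric N→N+K cloning channel W_CP(ρ) = (d_S^N / d_S^{N+K}) Π_sym^{(N+K)} (ρ ⊗ I) Π_sym^{(N+K)}; together with the complementary trace this shows optimal cloning and optimal transposition are complementary channels. -/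

import Mathlib

open Matrix Kronecker BigOperators ComplexOrder

noncomputable section

/-- The matrix of the permutation `π ∈ S_M` acting on the `M` tensor factors of `(ℂ^d)^{⊗M}`. -/
def permMat (d M : ℕ) (π : Equiv.Perm (Fin M)) :
    Matrix (Fin M → Fin d) (Fin M → Fin d) ℂ :=
  Matrix.of fun x y => if x = y ∘ π.symm then 1 else 0

/-- The orthogonal projector onto the symmetric subspace of `(ℂ^d)^{⊗M}`. -/
def symProj (d M : ℕ) : Matrix (Fin M → Fin d) (Fin M → Fin d) ℂ :=
  ((M.factorial : ℂ))⁻¹ • ∑ π : Equiv.Perm (Fin M), permMat d M π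

/-- The dimension `d_S^M = binom(M+d-1, d-1)` of the symmetric subspace of `(ℂ^d)^{⊗M}`. -/
def dS (d M : ℕ) : ℕ := (M + d - 1).choose (d - 1)

/-- Regard a pair of tuples as a single tuple via `Fin (N+K) ≃ Fin N ⊕ Fin K`. -/
def pairToFun (d N K : ℕ) (x : Fin N → Fin d) (o : Fin K → Fin d) :
    Fin (N + K) → Fin d :=
  fun i => Sum.elim x o (finSumFinEquiv.symm i)

/-- The projector onto the symmetric subspace of `(ℂ^d)^{⊗(N+K)}`, regarded as a matrix
indexed by pairs `((x,o),(x',o'))`. -/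
def symProjNK (d N K : ℕ) :
    Matrix ((Fin N → Fin d) × (Fin K → Fin d)) ((Fin N → Fin d) × (Fin K → Fin d)) ℂ :=
  Matrix.of fun p q =>
    symProj d (N + K) (pairToFun d N K p.1 p.2) (pairToFun d N K q.1 q.2)

/-- Partial trace over the output (second) factor. -/
def trOut {d N K : ℕ}
    (J : Matrix ((Fin N → Fin d) × (Fin K → Fin d)) ((Fin N → Fin d) × (Fin K → Fin d)) ℂ) :
    Matrix (Fin N → Fin d) (Fin N → Fin d) ℂ :=
  Matrix.of fun x x' => ∑ o : Fin K → Fin d, J (x, o) (x', o)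

/-- The Stinespring isometry `V((a',b',b), a) = sqrt(d_S^N/d_S^{N+K}) Π_sym^{(N+K)}((a',b'),(a,b))`
realising simultaneously optimal `N→K` transposition and optimal `N→N+K` cloning. -/
def stIso (d N K : ℕ) :
    Matrix ((Fin N → Fin d) × (Fin K → Fin d) × (Fin K → Fin d)) (Fin N → Fin d) ℂ :=
  Matrix.of fun p a =>
    (Real.sqrt ((dS d N : ℝ) / (dS d (N + K) : ℝ)) : ℂ) *
      symProjNK d N K (p.1, p.2.1) (a, p.2.2)

lemma symProj_star (d M : ℕ) (x y : Fin M → Fin d) :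
    (starRingEnd ℂ) (symProj d M x y) = symProj d M x y := by
  simp only [symProj, permMat, Matrix.smul_apply, Matrix.sum_apply, Matrix.of_apply,
    smul_eq_mul, _root_.map_mul, map_inv₀, map_natCast, map_sum]
  congr 1
  refine Finset.sum_congr rfl fun π _ => ?_
  split <;> simp

lemma symProj_symm (d M : ℕ) (x y : Fin M → Fin d) :
    symProj d M x y = symProj d M y x := by
  simp only [symProj, permMat, Matrix.smul_apply, Matrix.sum_apply, Matrix.of_apply]
  congr 1
  refine Finset.sum_equiv (Equiv.inv _) (by simp) fun π _ => ?_
  congr 1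
  simp only [eq_iff_iff]
  constructor
  · intro h; funext i
    have := congrFun h (π i); simpa [Equiv.Perm.inv_def, Equiv.symm_symm] using this.symm
  · intro h; funext i
    have := congrFun h (π.symm i)
    simp only [Function.comp_apply, Equiv.Perm.inv_def] at this ⊢
    rw [this]; congr 1; simp [Equiv.Perm.inv_def]

/-- Tracing out the last register of the Stinespring dilation `V ρ V†` yields Werner's
optimal universal symmetric `N→N+K` cloning channel
`W_CP(ρ) = (d_S^N/d_S^{N+K}) Π_sym^{(N+K)} (ρ ⊗ 1) Π_sym^{(N+K)}`. -/
theorem stmt6 (d N K : ℕ) (hd : 2 ≤ d) (hN : 1 ≤ N) (hK : 1 ≤ K)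
    (ρ : Matrix (Fin N → Fin d) (Fin N → Fin d) ℂ)
    (a'₁ a'₂ : Fin N → Fin d) (b'₁ b'₂ : Fin K → Fin d) :
    (∑ b : Fin K → Fin d,
        (stIso d N K * ρ * (stIso d N K)ᴴ) (a'₁, b'₁, b) (a'₂, b'₂, b)) =
      ((dS d N : ℂ) / (dS d (N + K) : ℂ)) *
        (symProjNK d N K * (ρ ⊗ₖ (1 : Matrix (Fin K → Fin d) (Fin K → Fin d) ℂ)) *
          symProjNK d N K) (a'₁, b'₁) (a'₂, b'₂) := by
  have hc : ((Real.sqrt ((dS d N : ℝ) / (dS d (N + K) : ℝ)) : ℂ)) *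
      ((Real.sqrt ((dS d N : ℝ) / (dS d (N + K) : ℝ)) : ℂ)) =
      (dS d N : ℂ) / (dS d (N + K) : ℂ) := by
    rw [← Complex.ofReal_mul, Real.mul_self_sqrt (by positivity)]
    push_cast; ring
  set c : ℂ := (Real.sqrt ((dS d N : ℝ) / (dS d (N + K) : ℝ)) : ℂ) with hcdef
  simp only [Matrix.mul_apply, stIso, conjTranspose_apply, Matrix.of_apply, _root_.map_mul,
    kroneckerMap_apply, Matrix.one_apply, Fintype.sum_prod_type,
    Complex.conj_ofReal]
  simp only [symProjNK, Matrix.of_apply, symProj_star]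
  rw [← hc]
  simp only [Finset.mul_sum, Finset.sum_mul, mul_ite, mul_zero, ite_mul, zero_mul]
  rw [Finset.sum_comm]
  refine Finset.sum_congr rfl fun a'' _ => ?_
  refine Finset.sum_congr rfl fun b _ => ?_
  refine Finset.sum_congr rfl fun a _ => ?_
  rw [Finset.sum_ite_eq' Finset.univ b]
  simp only [Finset.mem_univ, if_true, star_mul', Complex.conj_ofReal,
    RCLike.star_def, symProj_star]
  rw [symProj_symm d (N+K) (pairToFun d N K a'' b)]
  ring

end
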